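/- arXiv:2006.10221 — 3 statements merged into one kernel-verified Lean document; each statement's English description precedes it below -/
import Mathlib

section
/- Let (x_1, …, x_m) be a list of positive integers with each x_i < t and Σ_i x_i ≥ t. Then the list can be partitioned into consecutive-free groups (a partition of the index set) such that the sum of each group lies in the interval [t, 3t). -/
lemma aux_10 {m t : ℕ} (ht : 0 < t) (x : Fin m → ℕ) (hlt : ∀ i, x i < t) :
    ∀ s : Finset (Fin m), t ≤ ∑ i ∈ s, x i →
      ∃ P : Finpartition s,
        ∀ g ∈ P.parts, t ≤ ∑ i ∈ g, x i ∧ ∑ i ∈ g, x i < 3 * t := by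
  intro s
  induction s using Finset.strongInduction with
  | _ s ih =>
    intro hs
    have hsne : s ≠ ⊥ := by
      intro h
      rw [h] at hs
      simp at hs; omega
    by_cases hbig : ∑ i ∈ s, x i < 3 * t
    · refine ⟨Finpartition.indiscrete hsne, ?_⟩
      intro g hg
      simp [Finpartition.indiscrete] at hg
      subst hg
      exact ⟨hs, hbig⟩
    · push_neg at hbig
      -- find a minimal subset u of s with sum ≥ t
      set 𝒮 : Finset (Finset (Fin m)) :=
        s.powerset.filter (fun u => t ≤ ∑ i ∈ u, x i) with h𝒮
      have hSne : 𝒮.Nonempty := ⟨s, by simp [h𝒮, hs]⟩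
      obtain ⟨u, hu, humin⟩ : ∃ u ∈ 𝒮, ∀ v ∈ 𝒮, ¬ v < u := by
        obtain ⟨u, hu⟩ := Finset.exists_minimal hSne
        exact ⟨u, hu.prop, fun v hv hvu => hu.not_lt hv hvu⟩
      rw [h𝒮, Finset.mem_filter, Finset.mem_powerset] at hu
      obtain ⟨hus, hut⟩ := hu
      have hune : u.Nonempty := by
        rcases Finset.eq_empty_or_nonempty u with h | h
        · rw [h] at hut; simp at hut; omega
        · exact h
      have hu2t : ∑ i ∈ u, x i < 2 * t := by
        obtain ⟨i, hi⟩ := hune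
        have herase : ∑ j ∈ u.erase i, x j < t := by
          by_contra h
          push_neg at h
          have : u.erase i ∈ 𝒮 := by
            rw [h𝒮, Finset.mem_filter, Finset.mem_powerset]
            exact ⟨(Finset.erase_subset i u).trans hus, h⟩
          exact humin _ this (Finset.erase_ssubset hi)
        have := Finset.add_sum_erase u x hi
        have := hlt i
        omega
      have hsplit : ∑ i ∈ s \ u, x i + ∑ i ∈ u, x i = ∑ i ∈ s, x i :=
        Finset.sum_sdiff hus
      have hrem : t ≤ ∑ i ∈ s \ u, x i := by omega
      have hssub : s \ u ⊂ s := by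
        obtain ⟨i, hi⟩ := hune
        refine Finset.ssubset_iff_of_subset (Finset.sdiff_subset) |>.2 ?_
        exact ⟨i, hus hi, by simp [hi]⟩
      obtain ⟨P, hP⟩ := ih (s \ u) hssub hrem
      refine ⟨P.extend (by simpa [Finset.nonempty_iff_ne_empty] using hune)
        Finset.sdiff_disjoint (by simpa using Finset.sdiff_union_of_subset hus), ?_⟩
      intro g hg
      rw [Finpartition.extend, Finset.mem_insert] at hg
      rcases hg with rfl | hg
      · exact ⟨hut, by omega⟩
      · exact hP g hg

theorem stmt_10 (m t : ℕ) (x : Fin m → ℕ) (hpos : ∀ i, 0 < x i)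
    (hlt : ∀ i, x i < t) (hsum : t ≤ ∑ i, x i) :
    ∃ P : Finpartition (Finset.univ : Finset (Fin m)),
      ∀ g ∈ P.parts, t ≤ ∑ i ∈ g, x i ∧ ∑ i ∈ g, x i < 3 * t := by
  rcases Nat.eq_zero_or_pos t with rfl | ht
  · rcases Nat.eq_zero_or_pos m with rfl | hm
    · exact ⟨Finpartition.empty _ |>.copy (by simp), by
        simp [Finpartition.empty, Finpartition.copy]⟩
    · exact absurd (hlt ⟨0, hm⟩) (by omega)
  · exact aux_10 ht x hlt Finset.univ hsum
end

section
/- Let t ≥ 1 be an integer and P a finite set of colored points with |P| = p ≥ t, such that every color class of P has at most ⌊p/t⌋ elements. Then P can be partitioned into ⌊p/t⌋ parts, each of size at least t and less than 2t, such that each part contains at most one point of each color. -/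
/-- In a nodup flattened list, elements of the same block have indices
closer than the block length. -/
lemma indexOf_flatten_block {α : Type*} [DecidableEq α] :
    ∀ (Ls : List (List α)), Ls.flatten.Nodup → ∀ b ∈ Ls, ∀ {x y : α},
      x ∈ b → y ∈ b → Ls.flatten.idxOf y < Ls.flatten.idxOf x + b.length := by
  intro Ls
  induction Ls with
  | nil => intro _ b hb; simp at hb
  | cons a Ls ih =>
    intro hnd b hb x y hx hy
    rw [List.flatten_cons] at hnd ⊢
    rw [List.mem_cons] at hb
    rcases hb with hb | hb
    · subst hb
      rw [List.idxOf_append_of_mem hy]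
      calc b.idxOf y < b.length := List.idxOf_lt_length_iff.2 hy
        _ ≤ (b ++ Ls.flatten).idxOf x + b.length := Nat.le_add_left _ _
    · have hxf : x ∈ Ls.flatten := List.mem_flatten.2 ⟨b, hb, hx⟩
      have hyf : y ∈ Ls.flatten := List.mem_flatten.2 ⟨b, hb, hy⟩
      have hdisj : a.Disjoint Ls.flatten := List.disjoint_of_nodup_append hnd
      have hxa : x ∉ a := fun h => hdisj h hxf
      have hya : y ∉ a := fun h => hdisj h hyf
      rw [List.idxOf_append_of_notMem hxa, List.idxOf_append_of_notMem hya]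
      have := ih hnd.of_append_right b hb hx hy
      omega

theorem stmt_11 {α C : Type*} [DecidableEq α] [DecidableEq C] (P : Finset α)
    (color : α → C) (t : ℕ) (ht : 1 ≤ t) (htp : t ≤ P.card)
    (hcol : ∀ c, (P.filter fun x => color x = c).card ≤ P.card / t) :
    ∃ Q : Finpartition P, Q.parts.card = P.card / t ∧
      ∀ p ∈ Q.parts, t ≤ p.card ∧ p.card < 2 * t ∧
        ∀ c, (p.filter fun x => color x = c).card ≤ 1 := by
  set m := P.card / t with hm
  have hm1 : 1 ≤ m := (Nat.one_le_div_iff (by omega)).2 htp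
  have hmt : m * t ≤ P.card := by rw [hm]; exact Nat.div_mul_le_self _ _
  have hpmt : P.card < (m + 1) * t := by
    have h : P.card / t < m + 1 := by rw [← hm]; omega
    exact Nat.lt_mul_of_div_lt h (by omega)
  -- the list of points, grouped by color
  set f : C → List α := fun c => (P.filter fun x => color x = c).toList with hf
  set cs : List C := (P.image color).toList with hcs
  set Ls : List (List α) := cs.map f with hLs
  set L : List α := Ls.flatten with hL
  have hmemL : ∀ x, x ∈ L ↔ x ∈ P := by
    intro x
    simp only [hL, List.mem_flatten, hLs, List.mem_map]
    constructor
    · rintro ⟨l, ⟨c, hc, rfl⟩, hx⟩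
      simp only [hf, Finset.mem_toList, Finset.mem_filter] at hx
      exact hx.1
    · intro hx
      refine ⟨f (color x), ⟨color x, ?_, rfl⟩, ?_⟩
      · simp [hcs, Finset.mem_toList]
        exact ⟨x, hx, rfl⟩
      · simp [hf, Finset.mem_toList, Finset.mem_filter, hx]
  have hLnd : L.Nodup := by
    rw [hL, List.nodup_flatten]
    constructor
    · rintro l hl
      rw [hLs, List.mem_map] at hl
      obtain ⟨c, _, rfl⟩ := hl
      exact Finset.nodup_toList _
    · rw [hLs, List.pairwise_map]
      refine List.Pairwise.imp ?_ (P.image color).nodup_toList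
      intro c c' hcc'
      intro x hx hx'
      simp only [hf, Finset.mem_toList, Finset.mem_filter] at hx hx'
      exact absurd (hx.2 ▸ hx'.2) hcc'
  have hlen : L.length = P.card := by
    have h1 : L.toFinset = P := by ext x; rw [List.mem_toFinset]; exact hmemL x
    rw [← List.toFinset_card_of_nodup hLnd, h1]
  -- index facts
  have hidx_lt : ∀ x ∈ P, L.idxOf x < P.card := fun x hx =>
    hlen ▸ List.idxOf_lt_length_iff.2 ((hmemL x).2 hx)
  have hsame : ∀ x ∈ P, ∀ y ∈ P, color x = color y →
      L.idxOf y < L.idxOf x + m := by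
    intro x hx y hy hcxy
    have hb : f (color x) ∈ Ls := by
      rw [hLs, List.mem_map]
      exact ⟨color x, by simp [hcs, Finset.mem_toList]; exact ⟨x, hx, rfl⟩, rfl⟩
    have hxb : x ∈ f (color x) := by
      simp [hf, Finset.mem_toList, Finset.mem_filter, hx]
    have hyb : y ∈ f (color x) := by
      simp [hf, Finset.mem_toList, Finset.mem_filter, hy, hcxy.symm]
    have hblen : (f (color x)).length ≤ m := by
      rw [hf]
      simpa [Finset.length_toList] using hcol (color x)
    have hkey := indexOf_flatten_block Ls (hL ▸ hLnd) _ hb hxb hyb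
    rw [← hL] at hkey
    omega
  have hresinj : ∀ x ∈ P, ∀ y ∈ P, color x = color y →
      L.idxOf x % m = L.idxOf y % m → x = y := by
    intro x hx y hy hcxy hmod
    have hinj := List.idxOf_inj (y := y) ((hmemL x).2 hx)
    rcases lt_trichotomy (L.idxOf x) (L.idxOf y) with h | h | h
    · exfalso
      have hdvd : m ∣ L.idxOf y - L.idxOf x :=
        (Nat.modEq_iff_dvd' h.le).1 hmod
      have := Nat.le_of_dvd (by omega) hdvd
      have := hsame x hx y hy hcxy
      omega
    · exact hinj.1 h
    · exfalso
      have hdvd : m ∣ L.idxOf x - L.idxOf y :=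
        (Nat.modEq_iff_dvd' h.le).1 hmod.symm
      have := Nat.le_of_dvd (by omega) hdvd
      have := hsame y hy x hx hcxy.symm
      omega
  -- the parts
  set part : ℕ → Finset α := fun j => P.filter fun x => L.idxOf x % m = j with hpart
  have hcard_part : ∀ j, (part j).card =
      ((Finset.range P.card).filter fun i => i % m = j).card := by
    intro j
    have himg : (part j).image (fun x => L.idxOf x) =
        (Finset.range P.card).filter fun i => i % m = j := by
      ext i
      simp only [Finset.mem_image, Finset.mem_filter, Finset.mem_range, hpart]
      constructor
      · rintro ⟨x, ⟨hx, hxm⟩, rfl⟩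
        exact ⟨hidx_lt x hx, hxm⟩
      · rintro ⟨hi, him⟩
        have hi' : i < L.length := hlen ▸ hi
        refine ⟨L.get ⟨i, hi'⟩, ⟨?_, ?_⟩, ?_⟩
        · exact (hmemL _).1 (L.get_mem _)
        · simp only [List.get_eq_getElem]
          rw [List.Nodup.idxOf_getElem hLnd i hi']; exact him
        · simp only [List.get_eq_getElem]
          exact List.Nodup.idxOf_getElem hLnd i hi'
      -- note: List.get l ⟨i,h⟩ = l[i]
    rw [← himg]
    rw [Finset.card_image_of_injOn]
    intro x hx y hy hxy
    simp only [hpart, Finset.coe_filter, Set.mem_setOf_eq] at hx hy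
    exact (List.idxOf_inj ((hmemL x).2 hx.1)).1 hxy
  -- size bounds on residue classes
  have hge : ∀ j < m, t ≤ ((Finset.range P.card).filter fun i => i % m = j).card := by
    intro j hj
    have hsub : (Finset.range t).image (fun k => j + k * m) ⊆
        (Finset.range P.card).filter fun i => i % m = j := by
      intro i hi
      simp only [Finset.mem_image, Finset.mem_range] at hi
      obtain ⟨k, hk, rfl⟩ := hi
      simp only [Finset.mem_filter, Finset.mem_range]
      constructor
      · have : j + k * m < (k + 1) * m := by
          rw [add_mul, one_mul]; omega
        have : (k + 1) * m ≤ t * m := Nat.mul_le_mul_right m (by omega)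
        have : t * m ≤ P.card := by rw [mul_comm]; exact hmt
        omega
      · rw [Nat.add_mul_mod_self_right, Nat.mod_eq_of_lt hj]
    have hcardimg : ((Finset.range t).image (fun k => j + k * m)).card = t := by
      rw [Finset.card_image_of_injOn, Finset.card_range]
      intro a _ b _ hab
      simp only at hab
      have : a * m = b * m := by omega
      exact Nat.eq_of_mul_eq_mul_right (by omega) this
    calc t = ((Finset.range t).image (fun k => j + k * m)).card := hcardimg.symm
      _ ≤ _ := Finset.card_le_card hsub
  have hplt : P.card ≤ (2 * t - 1) * m := by
    have h1 : P.card + 1 ≤ m * t + t := by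
      have : (m + 1) * t = m * t + t := by ring
      omega
    have h2 : t - 1 ≤ (t - 1) * m := Nat.le_mul_of_pos_right _ (by omega)
    have h3 : (2 * t - 1) * m = t * m + (t - 1) * m := by
      rw [← add_mul]; congr 1; omega
    have h4 : m * t = t * m := mul_comm m t
    omega
  have hlt : ∀ j, ((Finset.range P.card).filter fun i => i % m = j).card < 2 * t := by
    intro j
    have hsub : ((Finset.range P.card).filter fun i => i % m = j) ⊆
        (Finset.range (2 * t - 1)).image (fun k => j + k * m) := by
      intro i hi
      simp only [Finset.mem_filter, Finset.mem_range] at hi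
      obtain ⟨hip, him⟩ := hi
      simp only [Finset.mem_image, Finset.mem_range]
      refine ⟨i / m, ?_, ?_⟩
      · rw [Nat.div_lt_iff_lt_mul (by omega)]
        omega
      · have h1 := Nat.div_add_mod i m
        have h2 : m * (i / m) = (i / m) * m := mul_comm _ _
        omega
    calc ((Finset.range P.card).filter fun i => i % m = j).card
        ≤ ((Finset.range (2 * t - 1)).image (fun k => j + k * m)).card :=
          Finset.card_le_card hsub
      _ ≤ (2 * t - 1) := by
          calc _ ≤ (Finset.range (2 * t - 1)).card := Finset.card_image_le
            _ = 2 * t - 1 := Finset.card_range _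
      _ < 2 * t := by omega
  have hpartcard_ge : ∀ j < m, t ≤ (part j).card := by
    intro j hj; rw [hcard_part]; exact hge j hj
  have hpartcard_lt : ∀ j, (part j).card < 2 * t := by
    intro j; rw [hcard_part]; exact hlt j
  have hpartne : ∀ j < m, (part j).Nonempty := by
    intro j hj
    rw [← Finset.card_pos]
    have := hpartcard_ge j hj
    omega
  -- build the Finpartition
  refine ⟨⟨(Finset.range m).image part, ?_, ?_, ?_⟩, ?_, ?_⟩
  · -- supIndep
    rw [Finset.supIndep_iff_pairwiseDisjoint]
    intro a ha b hb hab
    simp only [Finset.coe_image, Finset.coe_range, Set.mem_image, Set.mem_Iio] at ha hb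
    obtain ⟨j, hj, rfl⟩ := ha
    obtain ⟨j', hj', rfl⟩ := hb
    have hjj' : j ≠ j' := fun h => hab (by rw [h])
    simp only [Function.onFun, id]
    rw [Finset.disjoint_left]
    intro x hx hx'
    simp only [hpart, Finset.mem_filter] at hx hx'
    exact hjj' (hx.2 ▸ hx'.2)
  · -- sup = P
    apply le_antisymm
    · apply Finset.sup_le
      intro b hb
      simp only [Finset.mem_image, Finset.mem_range] at hb
      obtain ⟨j, _, rfl⟩ := hb
      exact Finset.filter_subset _ _
    · intro x hx
      rw [Finset.sup_image]
      rw [Finset.mem_sup]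
      refine ⟨L.idxOf x % m, ?_, ?_⟩
      · rw [Finset.mem_range]; exact Nat.mod_lt _ (by omega)
      · show x ∈ part (List.idxOf x L % m)
        simp only [hpart, Finset.mem_filter]
        exact ⟨hx, trivial⟩
  · -- ∅ not a part
    intro hbot
    simp only [Finset.bot_eq_empty, Finset.mem_image, Finset.mem_range] at hbot
    obtain ⟨j, hj, hje⟩ := hbot
    obtain ⟨x, hx⟩ := hpartne j hj
    rw [hje] at hx
    exact absurd hx (Finset.notMem_empty x)
  · -- card = m
    rw [Finset.card_image_of_injOn, Finset.card_range]
    intro j hj j' hj' hjj'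
    simp only [Finset.coe_range, Set.mem_Iio] at hj hj'
    obtain ⟨x, hx⟩ := hpartne j hj
    have hx' : x ∈ part j' := hjj' ▸ hx
    simp only [hpart, Finset.mem_filter] at hx hx'
    omega
  · -- properties of each part
    intro q hq
    simp only [Finset.mem_image, Finset.mem_range] at hq
    obtain ⟨j, hj, rfl⟩ := hq
    refine ⟨hpartcard_ge j hj, hpartcard_lt j, ?_⟩
    intro c
    rw [Finset.card_le_one]
    intro x hx y hy
    simp only [hpart, Finset.mem_filter] at hx hy
    obtain ⟨⟨hxP, hxj⟩, hxc⟩ := hx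
    obtain ⟨⟨hyP, hyj⟩, hyc⟩ := hy
    exact hresinj x hxP y hyP (by rw [hxc, hyc]) (by rw [hxj, hyj])
end

section
/- Let s : V × V → ℝ≥0 be a symmetric similarity on a finite set V, let 𝒴 = {Y_1, …, Y_k} be a partition of V with n = |V| and max_i |Y_i| = m_f ≤ n/2 with n ≥ 2, and suppose R ≥ β·Σ_{i<j} s(Y_i,Y_j)·(n − |Y_i| − |Y_j|) for some 0 ≤ β ≤ 1, where s(A,B) = Σ_{a∈A,b∈B} s(a,b). Then Σ_i β·(n − |Y_i|)·s(Y_i) + R ≥ β·(1 − 2m_f/n)·(n − 2)·s(V), where s(Y) = Σ_{{u,v}⊆Y} s(u,v) and s(V) = Σ_{{u,v}⊆V} s(u,v). -/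
/-- Sum of similarities over unordered pairs within a finite set. -/
noncomputable def pairSum {α : Type*} [DecidableEq α] (s : α → α → ℝ) (Y : Finset α) : ℝ :=
  (∑ p ∈ Y.offDiag, s p.1 p.2) / 2

/-- Sum of similarities between two sets. -/
noncomputable def crossSum {α : Type*} (s : α → α → ℝ) (A B : Finset α) : ℝ :=
  ∑ a ∈ A, ∑ b ∈ B, s a b

lemma offDiag_sum_eq {α : Type*} [DecidableEq α] (s : α → α → ℝ) (Y : Finset α) :
    ∑ p ∈ Y.offDiag, s p.1 p.2 = (∑ u ∈ Y, ∑ v ∈ Y, s u v) - ∑ u ∈ Y, s u u := by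
  have h := Finset.sum_union (f := fun p : α × α => s p.1 p.2)
    (Finset.disjoint_diag_offDiag Y)
  rw [Finset.diag_union_offDiag, Finset.sum_product, Finset.sum_diag] at h
  linarith

theorem stmt_14 {α : Type*} [Fintype α] [DecidableEq α] (s : α → α → ℝ)
    (hsymm : ∀ u v, s u v = s v u) (hnn : ∀ u v, 0 ≤ s u v)
    (P : Finpartition (Finset.univ : Finset α))
    (n : ℝ) (hn : n = Fintype.card α) (hn2 : 2 ≤ n)
    (mf : ℕ) (hmf : mf = P.parts.sup Finset.card) (hmf2 : (mf : ℝ) ≤ n / 2)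
    (β : ℝ) (hβ0 : 0 ≤ β) (hβ1 : β ≤ 1) (R : ℝ)
    (hR : R ≥ β * ((1 / 2) *
      ∑ p ∈ P.parts.offDiag, crossSum s p.1 p.2 * (n - p.1.card - p.2.card))) :
    ∑ Y ∈ P.parts, β * (n - Y.card) * pairSum s Y + R ≥
      β * (1 - 2 * mf / n) * (n - 2) * pairSum s Finset.univ := by
  -- summing over the partition
  have hpart : ∀ f : α → ℝ, ∑ u, f u = ∑ A ∈ P.parts, ∑ u ∈ A, f u := by
    intro f
    have h := Finset.sum_biUnion (f := f) P.supIndep.pairwiseDisjoint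
    rw [P.biUnion_parts] at h
    exact h
  have hcard : ∀ Y ∈ P.parts, (Y.card : ℝ) ≤ mf := by
    intro Y hY
    exact_mod_cast Nat.cast_le.mpr (hmf ▸ Finset.le_sup hY)
  have hpairnn : ∀ Y : Finset α, 0 ≤ pairSum s Y := by
    intro Y
    exact div_nonneg (Finset.sum_nonneg fun p _ => hnn _ _) (by norm_num)
  have hcrossnn : ∀ A B : Finset α, 0 ≤ crossSum s A B := by
    intro A B
    exact Finset.sum_nonneg fun a _ => Finset.sum_nonneg fun b _ => hnn _ _
  -- the decomposition of pairSum over the partition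
  have hdouble : ∑ u, ∑ v, s u v = ∑ A ∈ P.parts, ∑ B ∈ P.parts, crossSum s A B := by
    rw [hpart]
    refine Finset.sum_congr rfl fun A _ => ?_
    rw [Finset.sum_comm]
    rw [hpart fun v => ∑ u ∈ A, s u v]
    refine Finset.sum_congr rfl fun B _ => ?_
    rw [crossSum, Finset.sum_comm]
  have hsplit : ∑ A ∈ P.parts, ∑ B ∈ P.parts, crossSum s A B =
      ∑ A ∈ P.parts, crossSum s A A + ∑ p ∈ P.parts.offDiag, crossSum s p.1 p.2 := by
    have h := Finset.sum_union (f := fun p : Finset α × Finset α => crossSum s p.1 p.2)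
      (Finset.disjoint_diag_offDiag P.parts)
    rw [Finset.diag_union_offDiag, Finset.sum_product, Finset.sum_diag] at h
    linarith
  have hdiag : ∑ A ∈ P.parts, ∑ u ∈ A, s u u = ∑ u, s u u := (hpart fun u => s u u).symm
  have hdecomp : pairSum s Finset.univ = ∑ Y ∈ P.parts, pairSum s Y +
      (1 / 2) * ∑ p ∈ P.parts.offDiag, crossSum s p.1 p.2 := by
    have hY : ∀ A ∈ P.parts, crossSum s A A =
        2 * pairSum s A + ∑ u ∈ A, s u u := by
      intro A _
      have := offDiag_sum_eq s A
      rw [pairSum, crossSum]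
      linarith
    have huniv := offDiag_sum_eq s Finset.univ
    rw [Finset.sum_congr rfl hY, Finset.sum_add_distrib, hdiag] at hsplit
    rw [pairSum, huniv, hdouble, hsplit]
    have h2 : ∑ x ∈ P.parts, 2 * pairSum s x = 2 * ∑ x ∈ P.parts, pairSum s x :=
      (Finset.mul_sum _ _ _).symm
    linarith
  set C := ∑ p ∈ P.parts.offDiag, crossSum s p.1 p.2 with hC
  have hCnn : 0 ≤ C := Finset.sum_nonneg fun p _ => hcrossnn _ _
  -- bound R from below
  have hR2 : R ≥ β * ((1 / 2) * ((n - 2 * mf) * C)) := by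
    refine le_trans ?_ hR
    gcongr
    rw [hC, Finset.mul_sum]
    refine Finset.sum_le_sum fun p hp => ?_
    rw [mul_comm]
    have h1 := hcard p.1 (Finset.mem_offDiag.mp hp).1
    have h2 := hcard p.2 (Finset.mem_offDiag.mp hp).2.1
    have := hcrossnn p.1 p.2
    nlinarith
  -- bound the per-part sum from below
  have hS : ∑ Y ∈ P.parts, β * (n - Y.card) * pairSum s Y ≥
      β * (n - 2 * mf) * ∑ Y ∈ P.parts, pairSum s Y := by
    rw [Finset.mul_sum]
    refine Finset.sum_le_sum fun Y hY => ?_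
    have h1 := hcard Y hY
    have h2 := hpairnn Y
    have hmfnn : (0:ℝ) ≤ mf := Nat.cast_nonneg mf
    nlinarith [mul_nonneg (mul_nonneg hβ0 h2) (by linarith : (0:ℝ) ≤ 2 * mf - Y.card)]
  -- combine
  have hmid : ∑ Y ∈ P.parts, β * (n - Y.card) * pairSum s Y + R ≥
      β * (n - 2 * mf) * pairSum s Finset.univ := by
    rw [hdecomp]
    nlinarith [hS, hR2]
  refine le_trans ?_ hmid
  have hX := hpairnn (Finset.univ : Finset α)
  have hnpos : (0:ℝ) < n := by linarith
  have hkey : β * (1 - 2 * mf / n) * (n - 2) ≤ β * (n - 2 * mf) := by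
    have h : (1 - 2 * mf / n) * (n - 2) ≤ n - 2 * mf := by
      have hne : n ≠ 0 := ne_of_gt hnpos
      have he : (1 - 2 * mf / n) * (n - 2) = (n - 2 * mf) - (2 * n - 4 * mf) / n := by
        field_simp
        ring
      have hd : 0 ≤ (2 * n - 4 * mf) / n := div_nonneg (by linarith) hnpos.le
      linarith [he.le, he.ge]
    nlinarith
  exact mul_le_mul_of_nonneg_right hkey hX
end
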